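/- Let F(x) = αx + β with α < 0, β > 0, and α + β > 0, on C = [-1, 1]. Then F is strongly pseudomonotone on C with constant γ = (α+β)/2. -/
import Mathlib

theorem stmt_3 (α β : ℝ) (hα : α < 0) (hβ : 0 < β) (hab : α + β > 0) :
    ∀ x ∈ Set.Icc (-1:ℝ) 1, ∀ y ∈ Set.Icc (-1:ℝ) 1,
      (α * x + β) * (y - x) ≥ 0 →
      (α * y + β) * (y - x) ≥ ((α + β) / 2) * (y - x)^2 := by
  rintro x ⟨hx1, hx2⟩ y ⟨hy1, hy2⟩ h
  have hfx : 0 < α * x + β := by nlinarith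
  have hyx : 0 ≤ y - x := nonneg_of_mul_nonneg_right h hfx
  have hbr : 0 ≤ α * y + β - ((α + β) / 2) * (y - x) := by nlinarith
  nlinarith [mul_nonneg hyx hbr]
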